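/- Let n ≥ 2 and let R be a Kähler curvature-type tensor on ℂ^n whose traceless bisectional curvature operator is nonnegative. Then the sum of any two eigenvalues of the Hermitian Ricci matrix Ric is nonnegative; equivalently, for any two vectors v, w ∈ ℂ^n with ‖v‖ = ‖w‖ = 1 and Σ_i v_i·conj(w_i) = 0, one has Re(Σ_{i,j} Ric(i,j)·v_i·conj(v_j)) + Re(Σ_{i,j} Ric(i,j)·w_i·conj(w_j)) ≥ 0. In particular Re(Ric(i,i)) + Re(Ric(j,j)) ≥ 0 for all i ≠ j. -/

import Mathlib

open BigOperators

/-- A Kähler curvature-type tensor on `ℂ^n`: `R i j k l` stands for `R_{i j̄ k l̄}` in a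
unitary frame, with the symmetries `R_{i j̄ k l̄} = R_{k j̄ i l̄}`, `R_{i j̄ k l̄} = R_{i l̄ k j̄}`
and the reality condition `conj R_{i j̄ k l̄} = R_{j ī l k̄}`. -/
def IsKahlerCurvTensor {n : ℕ} (R : Fin n → Fin n → Fin n → Fin n → ℂ) : Prop :=
  (∀ i j k l, R i j k l = R k j i l) ∧
  (∀ i j k l, R i j k l = R i l k j) ∧
  (∀ i j k l, starRingEnd ℂ (R i j k l) = R j i l k)

/-- The Ricci tensor `Ric(i,j) = Σ_k R(i,j,k,k)` of a curvature-type tensor. -/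
noncomputable def ricci {n : ℕ} (R : Fin n → Fin n → Fin n → Fin n → ℂ) (i j : Fin n) : ℂ :=
  ∑ k, R i j k k

/-- The scalar curvature `r = Σ_i Re(Ric(i,i))` of a curvature-type tensor. -/
noncomputable def scalarCurv {n : ℕ} (R : Fin n → Fin n → Fin n → Fin n → ℂ) : ℝ :=
  ∑ i, (ricci R i i).re

/-- `η` belongs to `H₀`, the real vector space of trace-free Hermitian `n × n` matrices
(identified with traceless real `(1,1)`-forms). -/
def MemH0 {n : ℕ} (η : Matrix (Fin n) (Fin n) ℂ) : Prop :=
  η.IsHermitian ∧ η.trace = 0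

/-- The inner product `⟨η,τ⟩ = Re Tr(ητ)` on Hermitian matrices. -/
noncomputable def h0Inner {n : ℕ} (η τ : Matrix (Fin n) (Fin n) ℂ) : ℝ :=
  (Matrix.trace (η * τ)).re

/-- The (real-valued) symmetric bilinear form `ℛ(η,τ) = Σ R(i,j,k,l)·η(j,i)·τ(l,k)`
induced by a curvature-type tensor on Hermitian matrices. -/
noncomputable def curvForm {n : ℕ} (R : Fin n → Fin n → Fin n → Fin n → ℂ)
    (η τ : Matrix (Fin n) (Fin n) ℂ) : ℝ :=
  (∑ i, ∑ j, ∑ k, ∑ l, R i j k l * η j i * τ l k).re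

/-- The traceless bisectional curvature operator of `R` is nonnegative:
`ℛ(η,η) ≥ 0` for every `η ∈ H₀`. -/
def NonnegTBC {n : ℕ} (R : Fin n → Fin n → Fin n → Fin n → ℂ) : Prop :=
  ∀ η : Matrix (Fin n) (Fin n) ℂ, MemH0 η → 0 ≤ curvForm R η η

/-- The traceless bisectional curvature operator of `R` is 2-nonnegative:
`ℛ(η,η) + ℛ(τ,τ) ≥ 0` for all orthonormal pairs `η, τ ∈ H₀`. -/
def TwoNonnegTBC {n : ℕ} (R : Fin n → Fin n → Fin n → Fin n → ℂ) : Prop :=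
  ∀ η τ : Matrix (Fin n) (Fin n) ℂ, MemH0 η → MemH0 τ →
    h0Inner η η = 1 → h0Inner τ τ = 1 → h0Inner η τ = 0 →
    0 ≤ curvForm R η η + curvForm R τ τ

namespace KCTaux
open ComplexConjugate
variable {n : ℕ}

/-- complex-valued curvature form -/
noncomputable def Bf (R : Fin n → Fin n → Fin n → Fin n → ℂ)
    (η τ : Matrix (Fin n) (Fin n) ℂ) : ℂ :=
  ∑ i, ∑ j, ∑ k, ∑ l, R i j k l * η j i * τ l k

def outer (x y : Fin n → ℂ) : Matrix (Fin n) (Fin n) ℂ :=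
  Matrix.of fun i j => x i * conj (y j)

lemma outer_apply (x y : Fin n → ℂ) (i j : Fin n) : outer x y i j = x i * conj (y j) := rfl

lemma curvForm_eq (R : Fin n → Fin n → Fin n → Fin n → ℂ) (η τ : Matrix (Fin n) (Fin n) ℂ) :
    curvForm R η τ = (Bf R η τ).re := rfl

lemma sum4_congr {M : Type*} [AddCommMonoid M] (f g : Fin n → Fin n → Fin n → Fin n → M)
    (h : ∀ i j k l, f i j k l = g i j k l) :
    (∑ i, ∑ j, ∑ k, ∑ l, f i j k l) = ∑ i, ∑ j, ∑ k, ∑ l, g i j k l :=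
  Finset.sum_congr rfl fun i _ => Finset.sum_congr rfl fun j _ =>
    Finset.sum_congr rfl fun k _ => Finset.sum_congr rfl fun l _ => h i j k l

lemma sum4_swap13 {M : Type*} [AddCommMonoid M] (f : Fin n → Fin n → Fin n → Fin n → M) :
    (∑ i, ∑ j, ∑ k, ∑ l, f i j k l) = ∑ i, ∑ j, ∑ k, ∑ l, f k j i l := by
  calc (∑ i, ∑ j, ∑ k, ∑ l, f i j k l)
      = ∑ j, ∑ i, ∑ k, ∑ l, f i j k l := Finset.sum_comm
    _ = ∑ j, ∑ k, ∑ i, ∑ l, f i j k l :=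
        Finset.sum_congr rfl fun j _ => Finset.sum_comm
    _ = ∑ k, ∑ j, ∑ i, ∑ l, f i j k l := Finset.sum_comm

lemma sum4_swap12_34 {M : Type*} [AddCommMonoid M] (f : Fin n → Fin n → Fin n → Fin n → M) :
    (∑ i, ∑ j, ∑ k, ∑ l, f i j k l) = ∑ i, ∑ j, ∑ k, ∑ l, f j i l k := by
  calc (∑ i, ∑ j, ∑ k, ∑ l, f i j k l)
      = ∑ j, ∑ i, ∑ k, ∑ l, f i j k l := Finset.sum_comm
    _ = ∑ j, ∑ i, ∑ l, ∑ k, f i j k l :=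
        Finset.sum_congr rfl fun j _ => Finset.sum_congr rfl fun i _ => Finset.sum_comm

variable (R : Fin n → Fin n → Fin n → Fin n → ℂ)

lemma Bf_outer_swap (h1 : ∀ i j k l, R i j k l = R k j i l) (x y : Fin n → ℂ) :
    Bf R (outer x x) (outer y y) = Bf R (outer x y) (outer y x) := by
  unfold Bf
  simp only [outer_apply]
  rw [sum4_swap13 (fun i j k l => R i j k l * (x j * conj (x i)) * (y l * conj (y k)))]
  refine sum4_congr _ _ fun i j k l => ?_
  rw [h1 k j i l]; ring

lemma Bf_conj (h3 : ∀ i j k l, conj (R i j k l) = R j i l k) (x y : Fin n → ℂ) :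
    conj (Bf R (outer x y) (outer y x)) = Bf R (outer y x) (outer x y) := by
  unfold Bf
  simp only [outer_apply, map_sum, map_mul, Complex.conj_conj, h3]
  rw [sum4_swap12_34 (fun i j k l => R j i l k * (conj (x j) * y i) * (conj (y l) * x k))]
  refine sum4_congr _ _ fun i j k l => ?_
  ring

noncomputable def BfHom (A : Matrix (Fin n) (Fin n) ℂ) : Matrix (Fin n) (Fin n) ℂ →+ ℂ where
  toFun τ := Bf R A τ
  map_zero' := by simp [Bf]
  map_add' τ σ := by
    unfold Bf
    simp only [Matrix.add_apply, ← Finset.sum_add_distrib]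
    exact sum4_congr _ _ fun i j k l => by ring

lemma Bf_sum_right {m : Type*} (s : Finset m) (A : Matrix (Fin n) (Fin n) ℂ)
    (T : m → Matrix (Fin n) (Fin n) ℂ) :
    Bf R A (∑ t ∈ s, T t) = ∑ t ∈ s, Bf R A (T t) :=
  map_sum (BfHom R A) T s

lemma Bf_add_pair (A B : Matrix (Fin n) (Fin n) ℂ) :
    Bf R (A + B) (A + B) = Bf R A A + Bf R A B + Bf R B A + Bf R B B := by
  unfold Bf
  simp only [Matrix.add_apply, ← Finset.sum_add_distrib]
  exact sum4_congr _ _ fun i j k l => by ring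

lemma Bf_sub_pair (A B : Matrix (Fin n) (Fin n) ℂ) :
    Bf R (A - B) (A - B) = Bf R A A - Bf R A B - Bf R B A + Bf R B B := by
  unfold Bf
  simp only [Matrix.sub_apply, ← Finset.sum_add_distrib, ← Finset.sum_sub_distrib]
  exact sum4_congr _ _ fun i j k l => by ring

lemma Bf_smul_pair (c : ℂ) (A : Matrix (Fin n) (Fin n) ℂ) :
    Bf R (c • A) (c • A) = c * c * Bf R A A := by
  unfold Bf
  simp only [Matrix.smul_apply, smul_eq_mul, Finset.mul_sum]
  exact sum4_congr _ _ fun i j k l => by ring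

lemma conj_sum_orth {x y : Fin n → ℂ} (hxy : ∑ i, x i * conj (y i) = 0) :
    ∑ i, y i * conj (x i) = 0 := by
  have := congrArg (conj) hxy
  simp only [map_sum, map_mul, Complex.conj_conj, map_zero] at this
  rw [← this]
  exact Finset.sum_congr rfl fun i _ => by ring

lemma memH0_eta1 {x y : Fin n → ℂ} (hxy : ∑ i, x i * conj (y i) = 0) :
    MemH0 (outer x y + outer y x) := by
  constructor
  · ext a b
    simp only [Matrix.conjTranspose_apply, Matrix.add_apply, outer_apply, star_add, star_mul',
      Complex.star_def, Complex.conj_conj]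
    ring
  · simp only [Matrix.trace, Matrix.diag, Matrix.add_apply, outer_apply,
      Finset.sum_add_distrib, hxy, conj_sum_orth hxy, add_zero]

lemma memH0_eta2 {x y : Fin n → ℂ} (hxy : ∑ i, x i * conj (y i) = 0) :
    MemH0 (Complex.I • (outer x y - outer y x)) := by
  constructor
  · ext a b
    simp only [Matrix.conjTranspose_apply, Matrix.smul_apply, Matrix.sub_apply, outer_apply,
      smul_eq_mul, star_mul', star_sub, Complex.star_def, Complex.conj_conj, Complex.conj_I]
    ring
  · simp only [Matrix.trace, Matrix.diag, Matrix.smul_apply, Matrix.sub_apply, outer_apply,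
      smul_eq_mul, mul_sub, Finset.sum_sub_distrib, ← Finset.mul_sum, hxy, conj_sum_orth hxy,
      mul_zero, sub_zero]

lemma sum_mul_conj_self {x : Fin n → ℂ} (hx : (∑ i, Complex.normSq (x i)) = 1) :
    ∑ i, x i * conj (x i) = 1 := by
  have h : ∀ i, x i * conj (x i) = (Complex.normSq (x i) : ℂ) := fun i => Complex.mul_conj _
  rw [Finset.sum_congr rfl fun i _ => h i, ← Complex.ofReal_sum, hx, Complex.ofReal_one]

lemma memH0_eta3 {x y : Fin n → ℂ} (hx : (∑ i, Complex.normSq (x i)) = 1)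
    (hy : (∑ i, Complex.normSq (y i)) = 1) :
    MemH0 (outer x x - outer y y) := by
  constructor
  · ext a b
    simp only [Matrix.conjTranspose_apply, Matrix.sub_apply, outer_apply, star_sub, star_mul',
      Complex.star_def, Complex.conj_conj]
    ring
  · simp only [Matrix.trace, Matrix.diag, Matrix.sub_apply, outer_apply,
      Finset.sum_sub_distrib, sum_mul_conj_self hx, sum_mul_conj_self hy, sub_self]

/-- key positivity: Re B(xx*, yy*) ≥ 0 for orthogonal x, y -/
lemma reC_nonneg (hR : IsKahlerCurvTensor R) (hpos : NonnegTBC R) (x y : Fin n → ℂ)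
    (hxy : ∑ i, x i * conj (y i) = 0) :
    0 ≤ (Bf R (outer x x) (outer y y)).re := by
  obtain ⟨h1, _h2, h3⟩ := hR
  have key : Bf R (outer x y + outer y x) (outer x y + outer y x)
      + Bf R (Complex.I • (outer x y - outer y x)) (Complex.I • (outer x y - outer y x))
      = 2 * Bf R (outer x y) (outer y x) + 2 * Bf R (outer y x) (outer x y) := by
    rw [Bf_add_pair, Bf_smul_pair, Bf_sub_pair, Complex.I_mul_I]; ring
  have hconj := Bf_conj R h3 x y
  have hp1 := hpos _ (memH0_eta1 hxy)
  have hp2 := hpos _ (memH0_eta2 hxy)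
  rw [curvForm_eq] at hp1 hp2
  have hre := congrArg Complex.re key
  rw [← hconj] at hre
  simp only [Complex.add_re, Complex.mul_re, Complex.conj_re, Complex.conj_im] at hre
  rw [Bf_outer_swap R h1]
  norm_num at hre
  linarith

lemma reAA_add_reBB (hR : IsKahlerCurvTensor R) (hpos : NonnegTBC R) (x y : Fin n → ℂ)
    (hx : (∑ i, Complex.normSq (x i)) = 1) (hy : (∑ i, Complex.normSq (y i)) = 1)
    (hxy : ∑ i, x i * conj (y i) = 0) :
    0 ≤ (Bf R (outer x x) (outer x x)).re + (Bf R (outer y y) (outer y y)).re := by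
  have hp := hpos _ (memH0_eta3 hx hy)
  rw [curvForm_eq, Bf_sub_pair] at hp
  have hAB := reC_nonneg R hR hpos x y hxy
  have hBA := reC_nonneg R hR hpos y x (conj_sum_orth hxy)
  simp only [Complex.add_re, Complex.sub_re] at hp
  linarith

lemma Bf_one (v : Fin n → ℂ) :
    Bf R (outer v v) 1 = ∑ i, ∑ j, ricci R i j * v j * conj (v i) := by
  unfold Bf ricci
  simp only [outer_apply, Matrix.one_apply, mul_ite, mul_one, mul_zero,
    Finset.sum_ite_eq', Finset.mem_univ, if_true, Finset.sum_mul]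
  exact Finset.sum_congr rfl fun i _ => Finset.sum_congr rfl fun j _ =>
    Finset.sum_congr rfl fun k _ => by ring

end KCTaux

/-- Proposition 3.3 / Theorem 1.2, last assertion: if the traceless bisectional curvature
operator is nonnegative, then the sum of any two eigenvalues of the Hermitian Ricci matrix
is nonnegative: for orthonormal `v, w` the sum of the Ricci form at `v` and at `w` is
nonnegative; in particular `Re Ric(i,i) + Re Ric(j,j) ≥ 0` for `i ≠ j`. -/
theorem ricci_two_eigenvalues_nonneg_of_nonnegTBC (n : ℕ) (hn : 2 ≤ n)
    (R : Fin n → Fin n → Fin n → Fin n → ℂ)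
    (hR : IsKahlerCurvTensor R) (hpos : NonnegTBC R) :
    (∀ v w : Fin n → ℂ, (∑ i, Complex.normSq (v i)) = 1 → (∑ i, Complex.normSq (w i)) = 1 →
      (∑ i, v i * starRingEnd ℂ (w i)) = 0 →
      0 ≤ (∑ i, ∑ j, ricci R i j * v i * starRingEnd ℂ (v j)).re +
          (∑ i, ∑ j, ricci R i j * w i * starRingEnd ℂ (w j)).re) ∧
    (∀ i j : Fin n, i ≠ j → 0 ≤ (ricci R i i).re + (ricci R j j).re) := by
  classical
  open KCTaux ComplexConjugate in
  have main : ∀ v w : Fin n → ℂ, (∑ i, Complex.normSq (v i)) = 1 →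
      (∑ i, Complex.normSq (w i)) = 1 → (∑ i, v i * conj (w i)) = 0 →
      0 ≤ (∑ i, ∑ j, ricci R i j * v i * conj (v j)).re +
          (∑ i, ∑ j, ricci R i j * w i * conj (w j)).re := by
    intro v w hv hw hvw
    set x : Fin n → ℂ := fun i => conj (v i) with hxdef
    set y : Fin n → ℂ := fun i => conj (w i) with hydef
    have hx : (∑ i, Complex.normSq (x i)) = 1 := by
      simpa [hxdef, Complex.normSq_conj] using hv
    have hy : (∑ i, Complex.normSq (y i)) = 1 := by
      simpa [hydef, Complex.normSq_conj] using hw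
    have hxy : (∑ i, x i * conj (y i)) = 0 := by
      have := congrArg conj hvw
      simp only [map_sum, map_mul, map_zero] at this
      simpa [hxdef, hydef] using this
    -- orthonormal basis extension
    let i0 : Fin n := ⟨0, by omega⟩
    let i1 : Fin n := ⟨1, by omega⟩
    have hi01 : i0 ≠ i1 := by simp [i0, i1, Fin.ext_iff]
    let V : Fin n → EuclideanSpace ℂ (Fin n) := fun k => if k = i0 then WithLp.toLp 2 x else WithLp.toLp 2 y
    have hxx := KCTaux.sum_mul_conj_self hx
    have hyy := KCTaux.sum_mul_conj_self hy
    have hyx := conj_sum_orth hxy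
    have hVi0i0 : (inner ℂ (V i0) (V i0) : ℂ) = 1 := by
      simp only [V, if_pos rfl, PiLp.inner_apply, RCLike.inner_apply, WithLp.ofLp_toLp]
      exact hxx
    have hVi1i1 : (inner ℂ (V i1) (V i1) : ℂ) = 1 := by
      simp only [V, if_neg hi01.symm, PiLp.inner_apply, RCLike.inner_apply, WithLp.ofLp_toLp]
      exact hyy
    have hVi0i1 : (inner ℂ (V i0) (V i1) : ℂ) = 0 := by
      simp only [V, if_pos rfl, if_neg hi01.symm, PiLp.inner_apply, RCLike.inner_apply,
        WithLp.ofLp_toLp]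
      exact hyx
    have hVi1i0 : (inner ℂ (V i1) (V i0) : ℂ) = 0 := by
      simp only [V, if_pos rfl, if_neg hi01.symm, PiLp.inner_apply, RCLike.inner_apply,
        WithLp.ofLp_toLp]
      exact hxy
    have hON : Orthonormal ℂ (({i0, i1} : Set (Fin n)).restrict V) := by
      rw [orthonormal_iff_ite]
      rintro ⟨a, ha⟩ ⟨b, hb⟩
      simp only [Set.restrict_apply, Subtype.mk.injEq]
      rcases ha with rfl | ha
      · rcases hb with rfl | hb
        · exact hVi0i0.trans (if_pos rfl).symm
        · rw [Set.mem_singleton_iff] at hb; subst hb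
          exact hVi0i1.trans (if_neg hi01).symm
      · rw [Set.mem_singleton_iff] at ha; subst ha
        rcases hb with rfl | hb
        · exact hVi1i0.trans (if_neg hi01.symm).symm
        · rw [Set.mem_singleton_iff] at hb; subst hb
          exact hVi1i1.trans (if_pos rfl).symm
    obtain ⟨b, hb⟩ := hON.exists_orthonormalBasis_extension_of_card_eq
      (by simp [finrank_euclideanSpace])
    have hb0 : (fun i => b i0 i) = x := by
      have : b i0 = V i0 := hb i0 (by simp)
      rw [this]; simp only [V, if_pos rfl, WithLp.ofLp_toLp]
    have hb1 : (fun i => b i1 i) = y := by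
      have : b i1 = V i1 := hb i1 (by simp)
      rw [this]; simp only [V, if_neg hi01.symm, WithLp.ofLp_toLp]
    -- delta identity
    have hdelta : ∀ a c : Fin n, (∑ m, b m a * conj (b m c)) = if a = c then 1 else 0 := by
      intro a c
      have h := b.sum_inner_mul_inner (EuclideanSpace.single a (1:ℂ))
        (EuclideanSpace.single c (1:ℂ))
      simp only [EuclideanSpace.inner_single_left, EuclideanSpace.inner_single_right,
        map_one, one_mul, EuclideanSpace.single_apply] at h
      rw [h]
      simp [eq_comm]
    have hone : (1 : Matrix (Fin n) (Fin n) ℂ) = ∑ m, outer (fun i => b m i) (fun i => b m i) := by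
      ext a c
      simp only [Matrix.sum_apply, outer_apply, Matrix.one_apply, hdelta a c]
    -- rewrite the two Ricci quadratic forms
    have hgoalx : (∑ i, ∑ j, ricci R i j * v i * conj (v j)) = Bf R (outer x x) 1 := by
      rw [Bf_one]
      exact Finset.sum_congr rfl fun i _ => Finset.sum_congr rfl fun j _ => by
        simp only [hxdef, Complex.conj_conj]; ring
    have hgoaly : (∑ i, ∑ j, ricci R i j * w i * conj (w j)) = Bf R (outer y y) 1 := by
      rw [Bf_one]
      exact Finset.sum_congr rfl fun i _ => Finset.sum_congr rfl fun j _ => by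
        simp only [hydef, Complex.conj_conj]; ring
    rw [hgoalx, hgoaly]
    -- expand over the basis
    have hsplit : ∀ z : Fin n → ℂ, (Bf R (outer z z) 1).re
        = ∑ m, (Bf R (outer z z) (outer (fun i => b m i) (fun i => b m i))).re := by
      intro z
      rw [hone, Bf_sum_right, Complex.re_sum]
    rw [hsplit x, hsplit y]
    -- orthogonality facts
    have horth : ∀ z : Fin n → ℂ, ∀ m m' : Fin n, m ≠ m' → (fun i => b m i) = z →
        (∑ i, z i * conj (b m' i)) = 0 := by
      intro z m m' hmm' hz
      have h := (b.orthonormal.2 hmm')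
      have h2 : (∑ i, conj (b m i) * b m' i) = 0 := by
        rw [← h]; simp only [PiLp.inner_apply, RCLike.inner_apply]
        exact Finset.sum_congr rfl fun i _ => mul_comm _ _
      have := congrArg conj h2
      simp only [map_sum, map_mul, Complex.conj_conj, map_zero] at this
      rw [← hz, ← this]
    -- split off the m = i0 (resp. i1) terms
    rw [← Finset.add_sum_erase Finset.univ _ (Finset.mem_univ i0),
        ← Finset.add_sum_erase Finset.univ _ (Finset.mem_univ i1)]
    have t1 : 0 ≤ (Bf R (outer x x) (outer (fun i => b i0 i) (fun i => b i0 i))).re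
        + (Bf R (outer y y) (outer (fun i => b i1 i) (fun i => b i1 i))).re := by
      rw [hb0, hb1]
      exact reAA_add_reBB R hR hpos x y hx hy hxy
    have t2 : 0 ≤ ∑ m ∈ Finset.univ.erase i0,
        (Bf R (outer x x) (outer (fun i => b m i) (fun i => b m i))).re := by
      refine Finset.sum_nonneg fun m hm => ?_
      refine reC_nonneg R hR hpos _ _ ?_
      exact horth x i0 m (Finset.ne_of_mem_erase hm).symm hb0
    have t3 : 0 ≤ ∑ m ∈ Finset.univ.erase i1,
        (Bf R (outer y y) (outer (fun i => b m i) (fun i => b m i))).re := by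
      refine Finset.sum_nonneg fun m hm => ?_
      refine reC_nonneg R hR hpos _ _ ?_
      exact horth y i1 m (Finset.ne_of_mem_erase hm).symm hb1
    linarith
  refine ⟨main, ?_⟩
  intro i j hij
  have h := main (fun a => if a = i then 1 else 0) (fun a => if a = j then 1 else 0)
    (by simp [apply_ite Complex.normSq])
    (by simp [apply_ite Complex.normSq])
    (by
      rw [Finset.sum_eq_zero]
      intro a _
      by_cases h1 : a = i
      · subst h1
        simp [hij]
      · simp [h1])
  have e1 : (∑ a, ∑ c, ricci R a c * (if a = i then (1:ℂ) else 0)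
      * starRingEnd ℂ (if c = i then (1:ℂ) else 0)) = ricci R i i := by
    simp [apply_ite (starRingEnd ℂ), mul_ite, ite_mul, Finset.sum_ite_eq']
  have e2 : (∑ a, ∑ c, ricci R a c * (if a = j then (1:ℂ) else 0)
      * starRingEnd ℂ (if c = j then (1:ℂ) else 0)) = ricci R j j := by
    simp [apply_ite (starRingEnd ℂ), mul_ite, ite_mul, Finset.sum_ite_eq']
  rw [e1, e2] at h
  exact h
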